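/- Let n, k, r be integers with r > k ≥ 2 and n ≥ 2k. If H is a vertex-k-maximal r-uniform hypergraph on n vertices, then |E(H)| = C(n, r) − C(n − k, r), where C(a, b) denotes the binomial coefficient (equal to 0 when b > a). -/

import Mathlib

/-- A finite hypergraph: a finite vertex set together with a finite set of
non-empty edges, each a subset of the vertex set. -/
structure FinHypergraph where
  verts : Finset ℕ
  edges : Finset (Finset ℕ)
  edge_sub : ∀ e ∈ edges, e ⊆ verts
  edge_nonempty : ∀ e ∈ edges, e.Nonempty

namespace FinHypergraph

/-- `H` is `r`-uniform if every edge has cardinality `r`. -/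
def IsUniform (H : FinHypergraph) (r : ℕ) : Prop := ∀ e ∈ H.edges, e.card = r

/-- `H'` is a subhypergraph of `H`. -/
def IsSub (H' H : FinHypergraph) : Prop := H'.verts ⊆ H.verts ∧ H'.edges ⊆ H.edges

/-- Two vertices are adjacent if some edge contains both. -/
def Adj (H : FinHypergraph) (u v : ℕ) : Prop := ∃ e ∈ H.edges, u ∈ e ∧ v ∈ e

/-- `H` is connected if every pair of vertices is joined by a path
(equivalently, a walk, i.e. is reachable via the adjacency relation). -/
def Connected (H : FinHypergraph) : Prop :=
  ∀ u ∈ H.verts, ∀ v ∈ H.verts, Relation.ReflTransGen H.Adj u v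

/-- The subhypergraph of `H` induced by the vertex set `Y`. -/
def induce (H : FinHypergraph) (Y : Finset ℕ) : FinHypergraph where
  verts := H.verts ∩ Y
  edges := H.edges.filter (fun e => e ⊆ Y)
  edge_sub := by
    intro e he
    simp only [Finset.mem_filter] at he
    exact Finset.subset_inter (H.edge_sub e he.1) he.2
  edge_nonempty := by
    intro e he
    simp only [Finset.mem_filter] at he
    exact H.edge_nonempty e he.1

/-- `X` is a vertex-cut of `H` if deleting `X` leaves a disconnected hypergraph. -/
def IsVertexCut (H : FinHypergraph) (X : Finset ℕ) : Prop :=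
  X ⊆ H.verts ∧ ¬ (H.induce (H.verts \ X)).Connected

open Classical in
/-- The vertex-connectivity of `H`: the minimum cardinality of a vertex-cut if one
exists, and `|V(H)| - 1` otherwise. -/
noncomputable def kappa (H : FinHypergraph) : ℕ :=
  if ∃ X, H.IsVertexCut X then sInf {m | ∃ X, H.IsVertexCut X ∧ X.card = m}
  else H.verts.card - 1

/-- `κ̄(H)`: the maximum vertex-connectivity over all subhypergraphs of `H`. -/
noncomputable def kappaBar (H : FinHypergraph) : ℕ :=
  sSup {m | ∃ H' : FinHypergraph, H'.IsSub H ∧ H'.kappa = m}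

/-- `H + e`: add the edge `e` (a non-empty subset of the vertices) to `H`. -/
def addEdge (H : FinHypergraph) (e : Finset ℕ) : FinHypergraph where
  verts := H.verts
  edges := if e ⊆ H.verts ∧ e.Nonempty then insert e H.edges else H.edges
  edge_sub := by
    intro f hf
    split at hf
    · rcases Finset.mem_insert.mp hf with rfl | hf
      · exact (by assumption : f ⊆ H.verts ∧ f.Nonempty).1
      · exact H.edge_sub f hf
    · exact H.edge_sub f hf
  edge_nonempty := by
    intro f hf
    split at hf
    · rcases Finset.mem_insert.mp hf with rfl | hf
      · exact (by assumption : f ⊆ H.verts ∧ f.Nonempty).2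
      · exact H.edge_nonempty f hf
    · exact H.edge_nonempty f hf

/-- `H + F`: add a set `F` of edges to `H`. -/
def addEdges (H : FinHypergraph) (F : Finset (Finset ℕ)) : FinHypergraph where
  verts := H.verts
  edges := H.edges ∪ F.filter (fun e => e ⊆ H.verts ∧ e.Nonempty)
  edge_sub := by
    intro f hf
    rcases Finset.mem_union.mp hf with hf | hf
    · exact H.edge_sub f hf
    · exact (Finset.mem_filter.mp hf).2.1
  edge_nonempty := by
    intro f hf
    rcases Finset.mem_union.mp hf with hf | hf
    · exact H.edge_nonempty f hf
    · exact (Finset.mem_filter.mp hf).2.2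

/-- `H` is vertex-`k`-maximal (as an `r`-uniform hypergraph): `κ̄(H) ≤ k`, but adding
any edge of the complement `H^c` creates a subhypergraph of connectivity at least `k + 1`. -/
def VertexKMaximal (H : FinHypergraph) (r k : ℕ) : Prop :=
  H.IsUniform r ∧ H.kappaBar ≤ k ∧
    ∀ e : Finset ℕ, e ⊆ H.verts → e.card = r → e ∉ H.edges →
      k + 1 ≤ (H.addEdge e).kappaBar

/-- The complete `r`-uniform hypergraph on the vertex set `V`. -/
def completeHG (V : Finset ℕ) (r : ℕ) : FinHypergraph where
  verts := V
  edges := (V.powersetCard r).filter (fun e => e.Nonempty)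
  edge_sub := by
    intro e he
    simp only [Finset.mem_filter, Finset.mem_powersetCard] at he
    exact he.1.1
  edge_nonempty := by
    intro e he
    exact (Finset.mem_filter.mp he).2

/-- The hypergraph on vertex set `V` with no edges. -/
def emptyHG (V : Finset ℕ) : FinHypergraph where
  verts := V
  edges := ∅
  edge_sub := by simp
  edge_nonempty := by simp

/-- The `r`-join `H₁ ∨_r H₂`: the union of `H₁` and `H₂` together with all
`r`-element subsets of `V(H₁) ∪ V(H₂)` meeting both `V(H₁)` and `V(H₂)`. -/
def rJoin (H1 H2 : FinHypergraph) (r : ℕ) : FinHypergraph where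
  verts := H1.verts ∪ H2.verts
  edges := H1.edges ∪ H2.edges ∪
    ((H1.verts ∪ H2.verts).powersetCard r).filter
      (fun e => (e ∩ H1.verts).Nonempty ∧ (e ∩ H2.verts).Nonempty)
  edge_sub := by
    intro e he
    rcases Finset.mem_union.mp he with he | he
    · rcases Finset.mem_union.mp he with he | he
      · exact (H1.edge_sub e he).trans Finset.subset_union_left
      · exact (H2.edge_sub e he).trans Finset.subset_union_right
    · exact (Finset.mem_powersetCard.mp (Finset.mem_filter.mp he).1).1
  edge_nonempty := by
    intro e he
    rcases Finset.mem_union.mp he with he | he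
    · rcases Finset.mem_union.mp he with he | he
      · exact H1.edge_nonempty e he
      · exact H2.edge_nonempty e he
    · obtain ⟨x, hx⟩ := (Finset.mem_filter.mp he).2.1
      exact ⟨x, (Finset.mem_inter.mp hx).1⟩

/-- The union of two hypergraphs. -/
def hUnion (H1 H2 : FinHypergraph) : FinHypergraph where
  verts := H1.verts ∪ H2.verts
  edges := H1.edges ∪ H2.edges
  edge_sub := by
    intro e he
    rcases Finset.mem_union.mp he with he | he
    · exact (H1.edge_sub e he).trans Finset.subset_union_left
    · exact (H2.edge_sub e he).trans Finset.subset_union_right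
  edge_nonempty := by
    intro e he
    rcases Finset.mem_union.mp he with he | he
    · exact H1.edge_nonempty e he
    · exact H2.edge_nonempty e he

/-- The union of the hypergraphs `f 0, …, f (m-1)`. -/
def unionOver (m : ℕ) (f : ℕ → FinHypergraph) : FinHypergraph where
  verts := (Finset.range m).biUnion (fun i => (f i).verts)
  edges := (Finset.range m).biUnion (fun i => (f i).edges)
  edge_sub := by
    intro e he
    obtain ⟨i, hi, hei⟩ := Finset.mem_biUnion.mp he
    exact ((f i).edge_sub e hei).trans (Finset.subset_biUnion_of_mem (fun i => (f i).verts) hi)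
  edge_nonempty := by
    intro e he
    obtain ⟨i, _, hei⟩ := Finset.mem_biUnion.mp he
    exact (f i).edge_nonempty e hei

/-- `C` is a component of `G`: a maximal connected subhypergraph. -/
def IsComponent (G C : FinHypergraph) : Prop :=
  C.IsSub G ∧ C.Connected ∧
    ∀ C' : FinHypergraph, C'.IsSub G → C'.Connected → C.IsSub C' → C' = C

/-- `(S, H₁, H₂)` is a separation triple of `H`: `S` is a minimum vertex-cut,
`H₁ = H[S ∪ V(C₁)]` and `H₂ = H[S ∪ V(C₂)]`, where `C₁` is a component of `H - S`
and `C₂ = H - (S ∪ V(C₁))`. -/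
def IsSeparationTriple (H : FinHypergraph) (S : Finset ℕ) (H1 H2 : FinHypergraph) : Prop :=
  H.IsVertexCut S ∧ (∀ X : Finset ℕ, H.IsVertexCut X → S.card ≤ X.card) ∧
    ∃ C1 : FinHypergraph, IsComponent (H.induce (H.verts \ S)) C1 ∧
      H1 = H.induce (S ∪ C1.verts) ∧
      H2 = H.induce (S ∪ (H.verts \ (S ∪ C1.verts)))

end FinHypergraph


namespace FinHypergraph

lemma isSub_refl (H : FinHypergraph) : H.IsSub H := ⟨subset_rfl, subset_rfl⟩

lemma isSub_trans {H1 H2 H3 : FinHypergraph} (h12 : H1.IsSub H2) (h23 : H2.IsSub H3) :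
    H1.IsSub H3 := ⟨h12.1.trans h23.1, h12.2.trans h23.2⟩

lemma kappa_le_of_cut (H : FinHypergraph) {X : Finset ℕ} (h : H.IsVertexCut X) :
    H.kappa ≤ X.card := by
  unfold kappa
  rw [if_pos ⟨X, h⟩]
  exact Nat.sInf_le ⟨X, h, rfl⟩

lemma kappa_le_card (H : FinHypergraph) : H.kappa ≤ H.verts.card := by
  unfold kappa
  split
  · next h =>
      obtain ⟨X, hX⟩ := h
      exact le_trans (Nat.sInf_le ⟨X, hX, rfl⟩) (Finset.card_le_card hX.1)
  · omega

lemma kappaBar_set_nonempty (H : FinHypergraph) :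
    {m | ∃ H' : FinHypergraph, H'.IsSub H ∧ H'.kappa = m}.Nonempty :=
  ⟨H.kappa, H, isSub_refl H, rfl⟩

lemma kappaBar_set_bddAbove (H : FinHypergraph) :
    BddAbove {m | ∃ H' : FinHypergraph, H'.IsSub H ∧ H'.kappa = m} := by
  refine ⟨H.verts.card, fun m hm => ?_⟩
  obtain ⟨H', hsub, rfl⟩ := hm
  exact le_trans H'.kappa_le_card (Finset.card_le_card hsub.1)

lemma kappa_le_kappaBar {H' H : FinHypergraph} (h : H'.IsSub H) : H'.kappa ≤ H.kappaBar :=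
  le_csSup (kappaBar_set_bddAbove H) ⟨H', h, rfl⟩

lemma kappaBar_le_iff {H : FinHypergraph} {k : ℕ} :
    H.kappaBar ≤ k ↔ ∀ K : FinHypergraph, K.IsSub H → K.kappa ≤ k := by
  constructor
  · intro h K hK
    exact le_trans (kappa_le_kappaBar hK) h
  · intro h
    apply csSup_le (kappaBar_set_nonempty H)
    rintro m ⟨K, hK, rfl⟩
    exact h K hK

lemma kappaBar_mono {H' H : FinHypergraph} (h : H'.IsSub H) : H'.kappaBar ≤ H.kappaBar := by
  apply csSup_le (kappaBar_set_nonempty H')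
  rintro m ⟨K, hK, rfl⟩
  exact kappa_le_kappaBar (isSub_trans hK h)

lemma exists_high_sub {H : FinHypergraph} {k : ℕ} (h : k ≤ H.kappaBar) :
    ∃ K : FinHypergraph, K.IsSub H ∧ k ≤ K.kappa := by
  obtain ⟨K, hK, hkap⟩ := Nat.sSup_mem (kappaBar_set_nonempty H) (kappaBar_set_bddAbove H)
  exact ⟨K, hK, hkap.symm ▸ h⟩

lemma addEdge_verts (H : FinHypergraph) (e : Finset ℕ) : (H.addEdge e).verts = H.verts := rfl

lemma addEdge_edges {H : FinHypergraph} {e : Finset ℕ} (he : e ⊆ H.verts) (hne : e.Nonempty) :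
    (H.addEdge e).edges = insert e H.edges := by
  simp [addEdge, he, hne]

lemma induce_verts' {H : FinHypergraph} {Y : Finset ℕ} (h : Y ⊆ H.verts) :
    (H.induce Y).verts = Y := by
  simp only [induce]
  exact Finset.inter_eq_right.mpr h

/-- Key cut-exhibiting lemma. -/
lemma isVertexCut_of (K : FinHypergraph) (X : Finset ℕ) (hX : X ⊆ K.verts)
    (A' : Finset ℕ) {a b : ℕ} (ha : a ∈ K.verts \ X) (hb : b ∈ K.verts \ X)
    (haA : a ∈ A') (hbA : b ∉ A')
    (hclose : ∀ g ∈ K.edges, g ⊆ K.verts \ X → (g ∩ A').Nonempty → g ⊆ A') :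
    K.IsVertexCut X := by
  refine ⟨hX, fun hconn => ?_⟩
  have hmem : ∀ c ∈ K.verts \ X, c ∈ (K.induce (K.verts \ X)).verts := by
    intro c hc
    simp only [induce, Finset.mem_inter]
    exact ⟨(Finset.mem_sdiff.mp hc).1, hc⟩
  have hreach := hconn a (hmem a ha) b (hmem b hb)
  have key : ∀ y, Relation.ReflTransGen (K.induce (K.verts \ X)).Adj a y → y ∈ A' := by
    intro y hy
    induction hy with
    | refl => exact haA
    | tail _ hadj ih =>
        obtain ⟨e, he, hy1, hy2⟩ := hadj
        simp only [induce, Finset.mem_filter] at he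
        exact hclose e he.1 he.2 ⟨_, Finset.mem_inter.mpr ⟨hy1, ih⟩⟩ hy2
  exact hbA (key b hreach)

lemma exists_witness (H : FinHypergraph) {k : ℕ} (hbar : H.kappaBar ≤ k) {f : Finset ℕ}
    (hf : f ⊆ H.verts) (hfne : f.Nonempty)
    (hkb : k + 1 ≤ (H.addEdge f).kappaBar) :
    ∃ K : FinHypergraph, K.IsSub (H.addEdge f) ∧ f ∈ K.edges ∧ k + 1 ≤ K.kappa := by
  obtain ⟨K, hsub, hkap⟩ := exists_high_sub hkb
  by_cases hfK : f ∈ K.edges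
  · exact ⟨K, hsub, hfK, hkap⟩
  · exfalso
    have hKH : K.IsSub H := by
      refine ⟨hsub.1, fun g hg => ?_⟩
      have := hsub.2 hg
      rw [addEdge_edges hf hfne] at this
      rcases Finset.mem_insert.mp this with rfl | h
      · exact absurd hg hfK
      · exact h
    have := le_trans (kappa_le_kappaBar hKH) hbar
    omega

end FinHypergraph
namespace FinHypergraph

lemma side_kmax (H : FinHypergraph) {k r : ℕ} (hkr : k < r)
    (hH : H.VertexKMaximal r k) (S A B : Finset ℕ)
    (hS : S ⊆ H.verts) (hsk : S.card ≤ k)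
    (hunion : A ∪ B = H.verts \ S) (hAB : Disjoint A B)
    (hsplit : ∀ g ∈ H.edges, g ⊆ H.verts \ S → g ⊆ A ∨ g ⊆ B) :
    (H.induce (S ∪ A)).VertexKMaximal r k := by
  obtain ⟨hunif, hbar, hmax⟩ := hH
  have hA : A ⊆ H.verts \ S := hunion ▸ Finset.subset_union_left
  have hB : B ⊆ H.verts \ S := hunion ▸ Finset.subset_union_right
  have hSA : S ∪ A ⊆ H.verts :=
    Finset.union_subset hS (hA.trans (Finset.sdiff_subset))
  have hv : (H.induce (S ∪ A)).verts = S ∪ A := induce_verts' hSA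
  have hsub1 : (H.induce (S ∪ A)).IsSub H :=
    ⟨Finset.inter_subset_left, Finset.filter_subset _ _⟩
  refine ⟨fun e he => hunif e (Finset.mem_filter.mp he).1,
    le_trans (kappaBar_mono hsub1) hbar, ?_⟩
  intro f hf hfr hfE1
  rw [hv] at hf
  have hfV : f ⊆ H.verts := hf.trans hSA
  have hfE : f ∉ H.edges := by
    intro h
    exact hfE1 (by simp only [induce, Finset.mem_filter]; exact ⟨h, hf⟩)
  have hfne : f.Nonempty := by
    rw [← Finset.card_pos, hfr]; omega
  obtain ⟨K, hKsub, hfK, hKkap⟩ := exists_witness H hbar hfV hfne (hmax f hfV hfr hfE)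
  have hfKv : f ⊆ K.verts := K.edge_sub f hfK
  have hKV : K.verts ⊆ H.verts := hKsub.1
  have hKedges : K.edges ⊆ insert f H.edges := by
    rw [← addEdge_edges hfV hfne]; exact hKsub.2
  -- f meets A
  have hfA : (f ∩ A).Nonempty := by
    rcases Finset.eq_empty_or_nonempty (f ∩ A) with h | h
    · exfalso
      have hfS : f ⊆ S := by
        intro y hy
        rcases Finset.mem_union.mp (hf hy) with h' | h'
        · exact h'
        · exact absurd (Finset.mem_inter.mpr ⟨hy, h'⟩) (by simp [h])
      have := Finset.card_le_card hfS
      omega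
    · exact h
  obtain ⟨a', ha'⟩ := hfA
  have ha'f : a' ∈ f := (Finset.mem_inter.mp ha').1
  have ha'A : a' ∈ A := (Finset.mem_inter.mp ha').2
  -- K avoids B
  have hKB : ∀ w ∈ K.verts, w ∉ B := by
    intro w hw hwB
    have hcut : K.IsVertexCut (S ∩ K.verts) := by
      have hnotS : ∀ y ∈ K.verts \ (S ∩ K.verts), y ∉ S := by
        intro y hy hyS
        obtain ⟨hy1, hy2⟩ := Finset.mem_sdiff.mp hy
        exact hy2 (Finset.mem_inter.mpr ⟨hyS, hy1⟩)
      refine isVertexCut_of K _ Finset.inter_subset_right A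
        (a := a') (b := w) ?_ ?_ ha'A (Finset.disjoint_left.mp hAB.symm hwB) ?_
      · refine Finset.mem_sdiff.mpr ⟨hfKv ha'f, fun hmem => ?_⟩
        exact (Finset.mem_sdiff.mp (hA ha'A)).2 (Finset.mem_inter.mp hmem).1
      · refine Finset.mem_sdiff.mpr ⟨hw, fun hmem => ?_⟩
        exact (Finset.mem_sdiff.mp (hB hwB)).2 (Finset.mem_inter.mp hmem).1
      · intro g hg hgsub hgA
        rcases Finset.mem_insert.mp (hKedges hg) with rfl | hgE
        · -- g = f : f avoids S here, so f ⊆ A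
          intro y hy
          rcases Finset.mem_union.mp (hf hy) with h' | h'
          · exact absurd h' (hnotS y (hgsub hy))
          · exact h'
        · rcases hsplit g hgE (fun y hy => Finset.mem_sdiff.mpr
            ⟨H.edge_sub g hgE hy, hnotS y (hgsub hy)⟩) with h | h
          · exact h
          · exfalso
            obtain ⟨y, hy⟩ := hgA
            obtain ⟨hy1, hy2⟩ := Finset.mem_inter.mp hy
            exact Finset.disjoint_left.mp hAB hy2 (h hy1)
    have := kappa_le_of_cut K hcut
    have hXc : (S ∩ K.verts).card ≤ S.card := Finset.card_le_card Finset.inter_subset_left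
    omega
  have hKSA : K.verts ⊆ S ∪ A := by
    intro w hw
    by_cases hwS : w ∈ S
    · exact Finset.mem_union_left _ hwS
    · have : w ∈ A ∪ B := hunion ▸ Finset.mem_sdiff.mpr ⟨hKV hw, hwS⟩
      rcases Finset.mem_union.mp this with h | h
      · exact Finset.mem_union_right _ h
      · exact absurd h (hKB w hw)
  have hfH1 : f ⊆ (H.induce (S ∪ A)).verts := by rw [hv]; exact hf
  have hsubK : K.IsSub ((H.induce (S ∪ A)).addEdge f) := by
    constructor
    · rw [addEdge_verts, hv]; exact hKSA
    · rw [addEdge_edges hfH1 hfne]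
      intro g hg
      rcases Finset.mem_insert.mp (hKedges hg) with rfl | hgE
      · exact Finset.mem_insert_self _ _
      · refine Finset.mem_insert_of_mem ?_
        simp only [induce, Finset.mem_filter]
        exact ⟨hgE, (K.edge_sub g hg).trans hKSA⟩
  exact le_trans hKkap (kappa_le_kappaBar hsubK)

end FinHypergraph
namespace FinHypergraph

theorem main_count {k r : ℕ} (hk : 2 ≤ k) (hkr : k < r) :
    ∀ n : ℕ, ∀ H : FinHypergraph, H.verts.card = n → H.VertexKMaximal r k →
      H.edges.card = n.choose r - (n - k).choose r := by
  intro n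
  induction n using Nat.strong_induction_on with
  | _ n IH =>
  intro H hcard hH
  obtain ⟨hunif, hbar, hmax⟩ := hH
  by_cases hnr : n < r
  · -- no edges possible
    have hE : H.edges = ∅ := by
      rw [Finset.eq_empty_iff_forall_notMem]
      intro e he
      have h1 := Finset.card_le_card (H.edge_sub e he)
      rw [hunif e he, hcard] at h1
      omega
    rw [hE, Finset.card_empty, Nat.choose_eq_zero_of_lt hnr]
    omega
  push_neg at hnr
  by_cases hnk : n < k + 2
  · -- n = r = k + 1 : H must be the single full edge
    have hnrk : n = r := by omega
    have hsingle : ∀ e ∈ H.edges, e = H.verts := by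
      intro e he
      exact Finset.eq_of_subset_of_card_le (H.edge_sub e he)
        (by rw [hunif e he, hcard, hnrk])
    have hVE : H.verts ∈ H.edges := by
      by_contra hne
      have hE : H.edges = ∅ := by
        rw [Finset.eq_empty_iff_forall_notMem]
        intro e he
        exact hne (hsingle e he ▸ he)
      have hVne : H.verts.Nonempty := by rw [← Finset.card_pos, hcard]; omega
      have hkb := hmax H.verts subset_rfl (by rw [hcard, hnrk]) hne
      have haE : (H.addEdge H.verts).edges = {H.verts} := by
        simp [addEdge_edges subset_rfl hVne, hE]
      have hle1 : (H.addEdge H.verts).kappaBar ≤ 1 := by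
        apply kappaBar_le_iff.mpr
        intro K hK
        have hKedges : K.edges ⊆ {H.verts} := haE ▸ hK.2
        by_cases hVK : H.verts ∈ K.edges
        · have hKv : K.verts = H.verts :=
            Finset.Subset.antisymm hK.1 (K.edge_sub _ hVK)
          obtain ⟨x, hx⟩ := hVne
          have hcd : 1 < (H.verts \ {x}).card := by
            rw [Finset.card_sdiff_of_subset (by simpa using hx), hcard, Finset.card_singleton]
            omega
          obtain ⟨a2, ha2, b2, hb2, hab2⟩ := Finset.one_lt_card.mp hcd
          have hcut : K.IsVertexCut {x} := by
            refine isVertexCut_of K {x} (by simp [hKv, hx]) {a2} (a := a2) (b := b2)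
              (by rw [hKv]; exact ha2) (by rw [hKv]; exact hb2)
              (Finset.mem_singleton_self a2)
              (fun h => hab2 (Finset.mem_singleton.mp h).symm) ?_
            intro g hg hgsub _
            exfalso
            have hgV := Finset.mem_singleton.mp (hKedges hg)
            subst hgV
            have := hgsub hx
            rw [hKv] at this
            exact (Finset.mem_sdiff.mp this).2 (Finset.mem_singleton_self x)
          have := kappa_le_of_cut K hcut
          rw [Finset.card_singleton] at this
          exact this
        · have hKE : K.edges = ∅ := by
            rw [Finset.eq_empty_iff_forall_notMem]
            intro g hg
            exact hVK ((Finset.mem_singleton.mp (hKedges hg)) ▸ hg)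
          by_cases h2 : 1 < K.verts.card
          · obtain ⟨a2, ha2, b2, hb2, hab2⟩ := Finset.one_lt_card.mp h2
            have hcut : K.IsVertexCut ∅ := by
              refine isVertexCut_of K ∅ (Finset.empty_subset _) {a2} (a := a2) (b := b2)
                (by simp [ha2]) (by simp [hb2]) (Finset.mem_singleton_self _)
                (fun h => hab2 (Finset.mem_singleton.mp h).symm) ?_
              intro g hg
              rw [hKE] at hg
              exact absurd hg (Finset.notMem_empty g)
            have := kappa_le_of_cut K hcut
            rw [Finset.card_empty] at this
            omega
          · have := kappa_le_card K
            omega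
      omega
    have hEeq : H.edges = {H.verts} := by
      apply Finset.Subset.antisymm
      · intro e he
        simp [hsingle e he]
      · simp [hVE]
    rw [hEeq, Finset.card_singleton, hnrk, Nat.choose_self,
      Nat.choose_eq_zero_of_lt (by omega : r - k < r)]
  -- MAIN CASE : r ≤ n, k + 2 ≤ n
  push_neg at hnk
  classical
  have hkH : H.kappa ≤ k := le_trans (kappa_le_kappaBar (isSub_refl H)) hbar
  have hcutex : ∃ X, H.IsVertexCut X := by
    by_contra hnc
    have : H.kappa = n - 1 := by
      unfold kappa
      rw [if_neg hnc, hcard]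
    omega
  have hkappa_eq : H.kappa = sInf {m | ∃ X, H.IsVertexCut X ∧ X.card = m} := by
    unfold kappa
    rw [if_pos hcutex]
  obtain ⟨X0, hX0⟩ := hcutex
  obtain ⟨S, hScut, hScard⟩ :=
    Nat.sInf_mem (⟨X0.card, X0, hX0, rfl⟩ :
      {m | ∃ X, H.IsVertexCut X ∧ X.card = m}.Nonempty)
  have hsk : S.card ≤ k := by rw [hScard, ← hkappa_eq]; exact hkH
  have hSsub : S ⊆ H.verts := hScut.1
  have hGv : (H.induce (H.verts \ S)).verts = H.verts \ S :=
    induce_verts' (Finset.sdiff_subset)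
  have hdisc := hScut.2
  unfold Connected at hdisc
  push_neg at hdisc
  obtain ⟨u₀, hu₀, v₀, hv₀, hnreach⟩ := hdisc
  rw [hGv] at hu₀ hv₀
  set A : Finset ℕ := (H.verts \ S).filter
    (fun v => Relation.ReflTransGen (H.induce (H.verts \ S)).Adj u₀ v) with hAdef
  set B : Finset ℕ := (H.verts \ S) \ A with hBdef
  have hA : A ⊆ H.verts \ S := Finset.filter_subset _ _
  have hB : B ⊆ H.verts \ S := Finset.sdiff_subset
  have hu₀A : u₀ ∈ A := Finset.mem_filter.mpr ⟨hu₀, Relation.ReflTransGen.refl⟩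
  have hv₀B : v₀ ∈ B := Finset.mem_sdiff.mpr
    ⟨hv₀, fun h => hnreach (Finset.mem_filter.mp h).2⟩
  have hunion : A ∪ B = H.verts \ S := Finset.union_sdiff_of_subset hA
  have hABsub : A ∪ B ⊆ H.verts \ S := le_of_eq hunion
  have hAB : Disjoint A B := Finset.disjoint_sdiff
  -- component closure
  have hclose : ∀ g ∈ H.edges, g ⊆ H.verts \ S → (g ∩ A).Nonempty → g ⊆ A := by
    intro g hg hgsub hgA
    obtain ⟨w, hw⟩ := hgA
    obtain ⟨hwg, hwA⟩ := Finset.mem_inter.mp hw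
    intro y hy
    have hgG0 : g ∈ (H.induce (H.verts \ S)).edges := by
      simp only [induce, Finset.mem_filter]
      exact ⟨hg, hgsub⟩
    have hAdj : (H.induce (H.verts \ S)).Adj w y := ⟨g, hgG0, hwg, hy⟩
    exact Finset.mem_filter.mpr ⟨hgsub hy, (Finset.mem_filter.mp hwA).2.tail hAdj⟩
  have hsplit : ∀ g ∈ H.edges, g ⊆ H.verts \ S → g ⊆ A ∨ g ⊆ B := by
    intro g hg hgsub
    rcases Finset.eq_empty_or_nonempty (g ∩ A) with h | h
    · right
      intro y hy
      refine Finset.mem_sdiff.mpr ⟨hgsub hy, fun hyA => ?_⟩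
      have : y ∈ g ∩ A := Finset.mem_inter.mpr ⟨hy, hyA⟩
      rw [h] at this
      exact absurd this (Finset.notMem_empty y)
    · exact Or.inl (hclose g hg hgsub h)
  -- (C2) : crossing sets meeting S are edges
  have hcross : ∀ f : Finset ℕ, f ⊆ H.verts → f.card = r → (f ∩ A).Nonempty →
      (f ∩ B).Nonempty → (f ∩ S).Nonempty → f ∈ H.edges := by
    intro f hfV hfr hfA hfB hfS
    by_contra hfE
    have hfne : f.Nonempty := by rw [← Finset.card_pos, hfr]; omega
    obtain ⟨K, hKsub, hfK, hKkap⟩ := exists_witness H hbar hfV hfne (hmax f hfV hfr hfE)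
    have hKedges : K.edges ⊆ insert f H.edges := by
      rw [← addEdge_edges hfV hfne]; exact hKsub.2
    obtain ⟨a', ha'⟩ := hfA
    obtain ⟨b', hb'⟩ := hfB
    obtain ⟨x0, hx0⟩ := hfS
    have hfKv : f ⊆ K.verts := K.edge_sub f hfK
    have hnotS : ∀ y ∈ K.verts \ (S ∩ K.verts), y ∉ S := by
      intro y hy hyS
      obtain ⟨hy1, hy2⟩ := Finset.mem_sdiff.mp hy
      exact hy2 (Finset.mem_inter.mpr ⟨hyS, hy1⟩)
    have hcut : K.IsVertexCut (S ∩ K.verts) := by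
      refine isVertexCut_of K _ Finset.inter_subset_right A
        (a := a') (b := b') ?_ ?_ (Finset.mem_inter.mp ha').2
        (Finset.disjoint_left.mp hAB.symm (Finset.mem_inter.mp hb').2) ?_
      · refine Finset.mem_sdiff.mpr ⟨hfKv (Finset.mem_inter.mp ha').1, fun hmem => ?_⟩
        exact (Finset.mem_sdiff.mp (hA (Finset.mem_inter.mp ha').2)).2
          (Finset.mem_inter.mp hmem).1
      · refine Finset.mem_sdiff.mpr ⟨hfKv (Finset.mem_inter.mp hb').1, fun hmem => ?_⟩
        exact (Finset.mem_sdiff.mp (hB (Finset.mem_inter.mp hb').2)).2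
          (Finset.mem_inter.mp hmem).1
      · intro g hg hgsub hgA
        rcases Finset.mem_insert.mp (hKedges hg) with rfl | hgE
        · exact absurd (Finset.mem_inter.mp hx0).2
            (hnotS x0 (hgsub (Finset.mem_inter.mp hx0).1))
        · rcases hsplit g hgE (fun y hy => Finset.mem_sdiff.mpr
            ⟨H.edge_sub g hgE hy, hnotS y (hgsub hy)⟩) with h | h
          · exact h
          · exfalso
            obtain ⟨y, hy⟩ := hgA
            obtain ⟨hy1, hy2⟩ := Finset.mem_inter.mp hy
            exact Finset.disjoint_left.mp hAB hy2 (h hy1)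
    have h1 := kappa_le_of_cut K hcut
    have h2 : (S ∩ K.verts).card ≤ S.card := Finset.card_le_card Finset.inter_subset_left
    omega
  -- basic cardinalities
  have hdSA : Disjoint S A := by
    rw [Finset.disjoint_right]
    intro y hyA
    exact (Finset.mem_sdiff.mp (hA hyA)).2
  have hdSB : Disjoint S B := by
    rw [Finset.disjoint_right]
    intro y hyB
    exact (Finset.mem_sdiff.mp (hB hyB)).2
  have hcardVS : A.card + B.card = n - S.card := by
    rw [← Finset.card_union_of_disjoint hAB, hunion, Finset.card_sdiff_of_subset hSsub, hcard]
  have hSlen : S.card ≤ n := by rw [← hcard]; exact Finset.card_le_card hSsub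
  have hSAv : S ∪ A ⊆ H.verts := Finset.union_subset hSsub (hA.trans Finset.sdiff_subset)
  have hSBv : S ∪ B ⊆ H.verts := Finset.union_subset hSsub (hB.trans Finset.sdiff_subset)
  have hn1 : (S ∪ A).card = S.card + A.card := Finset.card_union_of_disjoint hdSA
  have hn2 : (S ∪ B).card = S.card + B.card := Finset.card_union_of_disjoint hdSB
  have hBpos : 0 < B.card := Finset.card_pos.mpr ⟨v₀, hv₀B⟩
  have hApos : 0 < A.card := Finset.card_pos.mpr ⟨u₀, hu₀A⟩
  -- the two sides are vertex-k-maximal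
  have hH1 := side_kmax H hkr ⟨hunif, hbar, hmax⟩ S A B hSsub hsk hunion hAB hsplit
  have hH2 := side_kmax H hkr ⟨hunif, hbar, hmax⟩ S B A hSsub hsk
    (by rw [Finset.union_comm]; exact hunion) hAB.symm
    (fun g hg hs => (hsplit g hg hs).symm)
  have hIH1 := IH (S.card + A.card) (by omega) (H.induce (S ∪ A))
    (by rw [induce_verts' hSAv, hn1]) hH1
  have hIH2 := IH (S.card + B.card) (by omega) (H.induce (S ∪ B))
    (by rw [induce_verts' hSBv, hn2]) hH2
  -- counting
  set N : Finset (Finset ℕ) := (H.verts.powersetCard r) \ H.edges with hNdef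
  have hEP : H.edges ⊆ H.verts.powersetCard r := by
    intro e he
    exact Finset.mem_powersetCard.mpr ⟨H.edge_sub e he, hunif e he⟩
  have hNcard : N.card = n.choose r - H.edges.card := by
    rw [hNdef, Finset.card_sdiff_of_subset hEP, Finset.card_powersetCard, hcard]
  have hEle : H.edges.card ≤ n.choose r := by
    have := Finset.card_le_card hEP
    rwa [Finset.card_powersetCard, hcard] at this
  have hchle : (n - k).choose r ≤ n.choose r := Nat.choose_le_choose r (Nat.sub_le n k)
  -- split N three ways
  set NB : Finset (Finset ℕ) := N.filter (fun f => ¬(f ∩ B = ∅)) with hNBdef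
  set N1 : Finset (Finset ℕ) := N.filter (fun f => f ∩ B = ∅) with hN1def
  set N2 : Finset (Finset ℕ) := NB.filter (fun f => f ∩ A = ∅) with hN2def
  set Nx : Finset (Finset ℕ) := NB.filter (fun f => ¬(f ∩ A = ∅)) with hNxdef
  have htot1 : N1.card + NB.card = N.card := by
    rw [hN1def, hNBdef]
    exact Finset.card_filter_add_card_filter_not _
  have htot2 : N2.card + Nx.card = NB.card := by
    rw [hN2def, hNxdef]
    exact Finset.card_filter_add_card_filter_not _
  -- facts about membership in N
  have hmemN : ∀ f, f ∈ N ↔ f ⊆ H.verts ∧ f.card = r ∧ f ∉ H.edges := by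
    intro f
    rw [hNdef, Finset.mem_sdiff, Finset.mem_powersetCard]
    tauto
  have hVsplit : ∀ y ∈ H.verts, y ∈ S ∨ y ∈ A ∨ y ∈ B := by
    intro y hy
    by_cases hyS : y ∈ S
    · exact Or.inl hyS
    · have : y ∈ A ∪ B := hunion ▸ Finset.mem_sdiff.mpr ⟨hy, hyS⟩
      rcases Finset.mem_union.mp this with h | h
      · exact Or.inr (Or.inl h)
      · exact Or.inr (Or.inr h)
  -- N1 = r-subsets of S∪A that are not edges of H1
  have hN1eq : N1 = ((S ∪ A).powersetCard r) \ (H.induce (S ∪ A)).edges := by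
    ext f
    simp only [hN1def, Finset.mem_filter, hmemN, Finset.mem_sdiff,
      Finset.mem_powersetCard]
    constructor
    · rintro ⟨⟨hfV, hfr, hfE⟩, hfB⟩
      refine ⟨⟨fun y hy => ?_, hfr⟩, fun hmem => ?_⟩
      · rcases hVsplit y (hfV hy) with h | h | h
        · exact Finset.mem_union_left _ h
        · exact Finset.mem_union_right _ h
        · exfalso
          have : y ∈ f ∩ B := Finset.mem_inter.mpr ⟨hy, h⟩
          rw [hfB] at this
          exact absurd this (Finset.notMem_empty y)
      · simp only [induce, Finset.mem_filter] at hmem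
        exact hfE hmem.1
    · rintro ⟨⟨hfSA, hfr⟩, hfE1⟩
      refine ⟨⟨hfSA.trans hSAv, hfr, fun hfE => ?_⟩, ?_⟩
      · exact hfE1 (by simp only [induce, Finset.mem_filter]; exact ⟨hfE, hfSA⟩)
      · rw [Finset.eq_empty_iff_forall_notMem]
        intro y hy
        obtain ⟨hy1, hy2⟩ := Finset.mem_inter.mp hy
        rcases Finset.mem_union.mp (hfSA hy1) with h | h
        · exact Finset.disjoint_left.mp hdSB h hy2
        · exact Finset.disjoint_left.mp hAB h hy2
  have hE1P : (H.induce (S ∪ A)).edges ⊆ (S ∪ A).powersetCard r := by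
    intro e he
    simp only [induce, Finset.mem_filter] at he
    exact Finset.mem_powersetCard.mpr ⟨he.2, hunif e he.1⟩
  have hE1le : (H.induce (S ∪ A)).edges.card ≤ (S.card + A.card).choose r := by
    have := Finset.card_le_card hE1P
    rwa [Finset.card_powersetCard, hn1] at this
  have hch1 : (S.card + A.card - k).choose r ≤ (S.card + A.card).choose r :=
    Nat.choose_le_choose r (Nat.sub_le _ _)
  have hN1card : N1.card = (S.card + A.card - k).choose r := by
    rw [hN1eq, Finset.card_sdiff_of_subset hE1P, Finset.card_powersetCard, hn1, hIH1]
    omega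
  -- N2 similarly
  have hN2eq : N2 = ((S ∪ B).powersetCard r) \ (H.induce (S ∪ B)).edges := by
    ext f
    simp only [hN2def, hNBdef, Finset.mem_filter, hmemN, Finset.mem_sdiff,
      Finset.mem_powersetCard]
    constructor
    · rintro ⟨⟨⟨hfV, hfr, hfE⟩, hfB⟩, hfA⟩
      refine ⟨⟨fun y hy => ?_, hfr⟩, fun hmem => ?_⟩
      · rcases hVsplit y (hfV hy) with h | h | h
        · exact Finset.mem_union_left _ h
        · exfalso
          have : y ∈ f ∩ A := Finset.mem_inter.mpr ⟨hy, h⟩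
          rw [hfA] at this
          exact absurd this (Finset.notMem_empty y)
        · exact Finset.mem_union_right _ h
      · simp only [induce, Finset.mem_filter] at hmem
        exact hfE hmem.1
    · rintro ⟨⟨hfSB, hfr⟩, hfE2⟩
      have hfV : f ⊆ H.verts := hfSB.trans hSBv
      have hfE : f ∉ H.edges := fun hfE =>
        hfE2 (by simp only [induce, Finset.mem_filter]; exact ⟨hfE, hfSB⟩)
      have hfnB : ¬(f ∩ B = ∅) := by
        intro hempty
        -- then f ⊆ S, impossible by cardinality
        have hfS : f ⊆ S := by
          intro y hy
          rcases Finset.mem_union.mp (hfSB hy) with h | h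
          · exact h
          · exfalso
            have : y ∈ f ∩ B := Finset.mem_inter.mpr ⟨hy, h⟩
            rw [hempty] at this
            exact absurd this (Finset.notMem_empty y)
        have := Finset.card_le_card hfS
        omega
      refine ⟨⟨⟨hfV, hfr, hfE⟩, hfnB⟩, ?_⟩
      rw [Finset.eq_empty_iff_forall_notMem]
      intro y hy
      obtain ⟨hy1, hy2⟩ := Finset.mem_inter.mp hy
      rcases Finset.mem_union.mp (hfSB hy1) with h | h
      · exact Finset.disjoint_left.mp hdSA h hy2
      · exact Finset.disjoint_left.mp hAB.symm h hy2
  have hE2P : (H.induce (S ∪ B)).edges ⊆ (S ∪ B).powersetCard r := by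
    intro e he
    simp only [induce, Finset.mem_filter] at he
    exact Finset.mem_powersetCard.mpr ⟨he.2, hunif e he.1⟩
  have hE2le : (H.induce (S ∪ B)).edges.card ≤ (S.card + B.card).choose r := by
    have := Finset.card_le_card hE2P
    rwa [Finset.card_powersetCard, hn2] at this
  have hch2 : (S.card + B.card - k).choose r ≤ (S.card + B.card).choose r :=
    Nat.choose_le_choose r (Nat.sub_le _ _)
  have hN2card : N2.card = (S.card + B.card - k).choose r := by
    rw [hN2eq, Finset.card_sdiff_of_subset hE2P, Finset.card_powersetCard, hn2, hIH2]
    omega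
  -- members of Nx are crossing subsets of A ∪ B
  have hNxmem : ∀ f ∈ Nx, f ⊆ A ∪ B ∧ f.card = r ∧ (f ∩ A).Nonempty ∧ (f ∩ B).Nonempty
      ∧ f ∉ H.edges := by
    intro f hf
    simp only [hNxdef, hNBdef, Finset.mem_filter, hmemN] at hf
    obtain ⟨⟨⟨hfV, hfr, hfE⟩, hfB⟩, hfA⟩ := hf
    have hfAne : (f ∩ A).Nonempty := Finset.nonempty_iff_ne_empty.mpr hfA
    have hfBne : (f ∩ B).Nonempty := Finset.nonempty_iff_ne_empty.mpr hfB
    have hfS : f ∩ S = ∅ := by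
      rw [Finset.eq_empty_iff_forall_notMem]
      intro y hy
      exact hfE (hcross f hfV hfr hfAne hfBne ⟨y, Finset.mem_inter.mpr
        ⟨(Finset.mem_inter.mp hy).1, (Finset.mem_inter.mp hy).2⟩⟩)
    refine ⟨fun y hy => ?_, hfr, hfAne, hfBne, hfE⟩
    rcases hVsplit y (hfV hy) with h | h | h
    · exfalso
      have : y ∈ f ∩ S := Finset.mem_inter.mpr ⟨hy, h⟩
      rw [hfS] at this
      exact absurd this (Finset.notMem_empty y)
    · exact Finset.mem_union_left _ h
    · exact Finset.mem_union_right _ h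
  by_cases habr : r ≤ A.card + B.card
  · -- big side: S.card = k
    have hskk : S.card = k := by
      by_contra hne
      have hslt : S.card + 1 ≤ k := by omega
      -- build a crossing non-edge inside A ∪ B
      have hP : r - 2 ≤ ((A ∪ B) \ {u₀, v₀}).card := by
        have h1 : ({u₀, v₀} : Finset ℕ).card ≤ 2 := Finset.card_insert_le _ _ |>.trans
          (by simp)
        have h2 := Finset.le_card_sdiff ({u₀, v₀} : Finset ℕ) (A ∪ B)
        have h3 : (A ∪ B).card = A.card + B.card := Finset.card_union_of_disjoint hAB
        omega
      obtain ⟨P, hPsub, hPcard⟩ := Finset.exists_subset_card_eq hP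
      set f : Finset ℕ := insert u₀ (insert v₀ P) with hfdef
      have huv : u₀ ≠ v₀ := by
        intro h
        exact Finset.disjoint_left.mp hAB hu₀A (h ▸ hv₀B)
      have hu₀P : u₀ ∉ insert v₀ P := by
        intro h
        rcases Finset.mem_insert.mp h with h | h
        · exact huv h
        · exact (Finset.mem_sdiff.mp (hPsub h)).2 (by simp)
      have hv₀P : v₀ ∉ P := fun h => (Finset.mem_sdiff.mp (hPsub h)).2 (by simp)
      have hfcard : f.card = r := by
        rw [hfdef, Finset.card_insert_of_notMem hu₀P,
          Finset.card_insert_of_notMem hv₀P, hPcard]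
        omega
      have hfAB : f ⊆ A ∪ B := by
        rw [hfdef]
        refine Finset.insert_subset (Finset.mem_union_left _ hu₀A)
          (Finset.insert_subset (Finset.mem_union_right _ hv₀B)
          (hPsub.trans (Finset.sdiff_subset.trans subset_rfl)))
      have hfV : f ⊆ H.verts := hfAB.trans (hABsub.trans Finset.sdiff_subset)
      have hfE : f ∉ H.edges := by
        intro h
        have hfVS : f ⊆ H.verts \ S := hfAB.trans hABsub
        rcases hsplit f h hfVS with hfa | hfb
        · exact Finset.disjoint_left.mp hAB (hfa (by rw [hfdef]; simp)) hv₀B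
        · exact Finset.disjoint_left.mp hAB hu₀A (hfb (by rw [hfdef]; simp))
      have hfne : f.Nonempty := by rw [← Finset.card_pos, hfcard]; omega
      obtain ⟨K, hKsub, hfK, hKkap⟩ := exists_witness H hbar hfV hfne
        (hmax f hfV hfcard hfE)
      have hKedges : K.edges ⊆ insert f H.edges := by
        rw [← addEdge_edges hfV hfne]; exact hKsub.2
      have hfKv : f ⊆ K.verts := K.edge_sub f hfK
      have key : ∀ x a' b', x ∈ f → a' ∈ f → a' ∈ A → a' ≠ x →
          b' ∈ f → b' ∈ B → b' ≠ x → False := by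
        intro x a' b' hxf ha'f ha'A ha'x hb'f hb'B hb'x
        have hXsub : (S ∩ K.verts) ∪ {x} ⊆ K.verts :=
          Finset.union_subset Finset.inter_subset_right (by simp [hfKv hxf])
        have hnotX : ∀ y, y ∈ K.verts → y ∉ S → y ≠ x →
            y ∈ K.verts \ ((S ∩ K.verts) ∪ {x}) := by
          intro y hy hyS hyx
          refine Finset.mem_sdiff.mpr ⟨hy, fun hmem => ?_⟩
          rcases Finset.mem_union.mp hmem with h | h
          · exact hyS (Finset.mem_inter.mp h).1
          · exact hyx (Finset.mem_singleton.mp h)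
        have hcut : K.IsVertexCut ((S ∩ K.verts) ∪ {x}) := by
          refine isVertexCut_of K _ hXsub A (a := a') (b := b')
            (hnotX a' (hfKv ha'f) (Finset.mem_sdiff.mp (hA ha'A)).2 ha'x)
            (hnotX b' (hfKv hb'f) (Finset.mem_sdiff.mp (hB hb'B)).2 hb'x)
            ha'A (Finset.disjoint_left.mp hAB.symm hb'B) ?_
          intro g hg hgsub hgA
          have hgnotx : x ∉ g := by
            intro hxg
            have := hgsub hxg
            exact (Finset.mem_sdiff.mp this).2
              (Finset.mem_union_right _ (Finset.mem_singleton_self x))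
          rcases Finset.mem_insert.mp (hKedges hg) with rfl | hgE
          · exact absurd hxf hgnotx
          · have hgVS : g ⊆ H.verts \ S := by
              intro y hy
              refine Finset.mem_sdiff.mpr ⟨H.edge_sub g hgE hy, fun hyS => ?_⟩
              have := hgsub hy
              exact (Finset.mem_sdiff.mp this).2 (Finset.mem_union_left _
                (Finset.mem_inter.mpr ⟨hyS, (Finset.mem_sdiff.mp this).1⟩))
            rcases hsplit g hgE hgVS with h | h
            · exact h
            · exfalso
              obtain ⟨y, hy⟩ := hgA
              obtain ⟨hy1, hy2⟩ := Finset.mem_inter.mp hy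
              exact Finset.disjoint_left.mp hAB hy2 (h hy1)
        have h1 := kappa_le_of_cut K hcut
        have h2 : ((S ∩ K.verts) ∪ {x}).card ≤ S.card + 1 := by
          refine le_trans (Finset.card_union_le _ _) ?_
          have : (S ∩ K.verts).card ≤ S.card :=
            Finset.card_le_card Finset.inter_subset_left
          simp only [Finset.card_singleton]
          omega
        omega
      -- f splits into f∩A and f∩B with total r ≥ 3
      have hfinter : (f ∩ A).card + (f ∩ B).card = r := by
        have hdisj : Disjoint (f ∩ A) (f ∩ B) :=
          hAB.mono Finset.inter_subset_right Finset.inter_subset_right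
        rw [← Finset.card_union_of_disjoint hdisj, ← Finset.inter_union_distrib_left,
          Finset.inter_eq_left.mpr hfAB, hfcard]
      have hu₀f : u₀ ∈ f := by rw [hfdef]; simp
      have hv₀f : v₀ ∈ f := by rw [hfdef]; simp
      have hu₀fA : u₀ ∈ f ∩ A := Finset.mem_inter.mpr ⟨hu₀f, hu₀A⟩
      have hv₀fB : v₀ ∈ f ∩ B := Finset.mem_inter.mpr ⟨hv₀f, hv₀B⟩
      have h2c : 1 < (f ∩ A).card ∨ 1 < (f ∩ B).card := by
        have hA1 : 0 < (f ∩ A).card := Finset.card_pos.mpr ⟨u₀, hu₀fA⟩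
        have hB1 : 0 < (f ∩ B).card := Finset.card_pos.mpr ⟨v₀, hv₀fB⟩
        omega
      rcases h2c with h2c | h2c
      · obtain ⟨x1, hx1, y1, hy1, hxy1⟩ := Finset.one_lt_card.mp h2c
        exact key x1 y1 v₀ (Finset.mem_inter.mp hx1).1 (Finset.mem_inter.mp hy1).1
          (Finset.mem_inter.mp hy1).2 (Ne.symm hxy1) hv₀f hv₀B
          (fun h => Finset.disjoint_left.mp hAB (h ▸ (Finset.mem_inter.mp hx1).2) hv₀B)
      · obtain ⟨x1, hx1, y1, hy1, hxy1⟩ := Finset.one_lt_card.mp h2c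
        exact key x1 u₀ y1 (Finset.mem_inter.mp hx1).1 hu₀f hu₀A
          (fun h => Finset.disjoint_left.mp hAB (h ▸ hu₀A) (Finset.mem_inter.mp hx1).2)
          (Finset.mem_inter.mp hy1).1 (Finset.mem_inter.mp hy1).2 (Ne.symm hxy1)
    -- Nx = crossing r-subsets of A ∪ B
    have hNxeq : Nx = ((A ∪ B).powersetCard r) \
        ((A.powersetCard r) ∪ (B.powersetCard r)) := by
      ext f
      constructor
      · intro hf
        obtain ⟨hfAB, hfr, hfAne, hfBne, hfE⟩ := hNxmem f hf
        refine Finset.mem_sdiff.mpr ⟨Finset.mem_powersetCard.mpr ⟨hfAB, hfr⟩,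
          fun hmem => ?_⟩
        rcases Finset.mem_union.mp hmem with h | h
        · obtain ⟨y, hy⟩ := hfBne
          exact Finset.disjoint_left.mp hAB
            ((Finset.mem_powersetCard.mp h).1 (Finset.mem_inter.mp hy).1)
            (Finset.mem_inter.mp hy).2
        · obtain ⟨y, hy⟩ := hfAne
          exact Finset.disjoint_left.mp hAB (Finset.mem_inter.mp hy).2
            ((Finset.mem_powersetCard.mp h).1 (Finset.mem_inter.mp hy).1)
      · intro hf
        obtain ⟨hfP, hfnmem⟩ := Finset.mem_sdiff.mp hf
        obtain ⟨hfAB, hfr⟩ := Finset.mem_powersetCard.mp hfP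
        have hfnA : ¬ f ⊆ A := fun h =>
          hfnmem (Finset.mem_union_left _ (Finset.mem_powersetCard.mpr ⟨h, hfr⟩))
        have hfnB : ¬ f ⊆ B := fun h =>
          hfnmem (Finset.mem_union_right _ (Finset.mem_powersetCard.mpr ⟨h, hfr⟩))
        have hfAne : ¬(f ∩ A = ∅) := by
          intro hempty
          refine hfnB (fun y hy => ?_)
          rcases Finset.mem_union.mp (hfAB hy) with h | h
          · exfalso
            have : y ∈ f ∩ A := Finset.mem_inter.mpr ⟨hy, h⟩
            rw [hempty] at this
            exact absurd this (Finset.notMem_empty y)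
          · exact h
        have hfBne : ¬(f ∩ B = ∅) := by
          intro hempty
          refine hfnA (fun y hy => ?_)
          rcases Finset.mem_union.mp (hfAB hy) with h | h
          · exact h
          · exfalso
            have : y ∈ f ∩ B := Finset.mem_inter.mpr ⟨hy, h⟩
            rw [hempty] at this
            exact absurd this (Finset.notMem_empty y)
        have hfVS : f ⊆ H.verts \ S := hfAB.trans hABsub
        have hfE : f ∉ H.edges := by
          intro h
          rcases hsplit f h hfVS with h' | h'
          · exact hfnA h'
          · exact hfnB h'
        simp only [hNxdef, hNBdef, Finset.mem_filter, hmemN]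
        exact ⟨⟨⟨hfVS.trans Finset.sdiff_subset, hfr, hfE⟩, hfBne⟩, hfAne⟩
    have hPdisj : Disjoint (A.powersetCard r) (B.powersetCard r) := by
      rw [Finset.disjoint_left]
      intro f hfA hfB
      have h1 := (Finset.mem_powersetCard.mp hfA).1
      have h2 := (Finset.mem_powersetCard.mp hfB).1
      have h3 := (Finset.mem_powersetCard.mp hfA).2
      have : f ⊆ A ∩ B := Finset.subset_inter h1 h2
      rw [Finset.disjoint_iff_inter_eq_empty.mp hAB] at this
      have h4 := Finset.card_le_card this
      rw [Finset.card_empty] at h4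
      omega
    have hPsub : (A.powersetCard r) ∪ (B.powersetCard r) ⊆ (A ∪ B).powersetCard r :=
      Finset.union_subset (Finset.powersetCard_mono Finset.subset_union_left)
        (Finset.powersetCard_mono Finset.subset_union_right)
    have hunioncard : (A ∪ B).card = A.card + B.card := Finset.card_union_of_disjoint hAB
    have hNxcard : Nx.card = (A.card + B.card).choose r -
        (A.card.choose r + B.card.choose r) := by
      rw [hNxeq, Finset.card_sdiff_of_subset hPsub, Finset.card_union_of_disjoint hPdisj,
        Finset.card_powersetCard, Finset.card_powersetCard, Finset.card_powersetCard,
        hunioncard]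
    have hPle : A.card.choose r + B.card.choose r ≤ (A.card + B.card).choose r := by
      have := Finset.card_le_card hPsub
      rwa [Finset.card_union_of_disjoint hPdisj, Finset.card_powersetCard,
        Finset.card_powersetCard, Finset.card_powersetCard, hunioncard] at this
    -- assemble
    have hnk2 : n - k = A.card + B.card := by omega
    have hn1k : S.card + A.card - k = A.card := by omega
    have hn2k : S.card + B.card - k = B.card := by omega
    rw [hn1k] at hN1card
    rw [hn2k] at hN2card
    have hNtotal : N.card = A.card.choose r + B.card.choose r +
        ((A.card + B.card).choose r - (A.card.choose r + B.card.choose r)) := by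
      omega
    rw [hnk2]
    omega
  · -- small side : A.card + B.card < r, everything relevant is zero
    push_neg at habr
    have hNx0 : Nx = ∅ := by
      rw [Finset.eq_empty_iff_forall_notMem]
      intro f hf
      obtain ⟨hfAB, hfr, _, _, _⟩ := hNxmem f hf
      have := Finset.card_le_card hfAB
      rw [hfr, Finset.card_union_of_disjoint hAB] at this
      omega
    have hz1 : (S.card + A.card - k).choose r = 0 :=
      Nat.choose_eq_zero_of_lt (by omega)
    have hz2 : (S.card + B.card - k).choose r = 0 :=
      Nat.choose_eq_zero_of_lt (by omega)
    have hz3 : (n - k).choose r = 0 := Nat.choose_eq_zero_of_lt (by omega)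
    rw [hz1] at hN1card
    rw [hz2] at hN2card
    have hNx0c : Nx.card = 0 := by rw [hNx0]; exact Finset.card_empty
    rw [hz3]
    omega

end FinHypergraph

/-- For `r > k ≥ 2` and `n ≥ 2k`, every vertex-`k`-maximal
`r`-uniform hypergraph on `n` vertices has exactly `C(n,r) - C(n-k,r)` edges. -/
theorem stmt_13 (n k r : ℕ) (hk : 2 ≤ k) (hkr : k < r) (hn : 2 * k ≤ n)
    (H : FinHypergraph) (hcard : H.verts.card = n) (hH : H.VertexKMaximal r k) :
    H.edges.card = n.choose r - (n - k).choose r :=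
  FinHypergraph.main_count hk hkr n H hcard hH
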